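/- The 2-dimensional Hausdorff measure on X = ℝ × ℚ_p (with the maximum metric) equals the product of Lebesgue measure on ℝ and the Haar measure on ℚ_p normalized so that ℤ_p has measure 1. -/

import Mathlib

open MeasureTheory Metric Set
open scoped ENNReal NNReal

variable {p : ℕ} [Fact p.Prime]

-- disjointness of balls around distinct residues
lemma dist_residues {n j k : ℕ} (hj : j < p ^ n) (hk : k < p ^ n) (hjk : j ≠ k) :
    ¬ ‖(j : ℚ_[p]) - (k : ℚ_[p])‖ ≤ (p : ℝ) ^ (-(n:ℤ)) := by
  intro h
  have : ‖((j - k : ℤ) : ℚ_[p])‖ ≤ (p : ℝ) ^ (-(n:ℤ)) := by push_cast; push_cast at h; exact h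
  rw [Padic.norm_int_le_pow_iff_dvd] at this
  have hne : (j : ℤ) - k ≠ 0 := sub_ne_zero.2 (by exact_mod_cast hjk)
  have hle := Int.le_of_dvd (abs_pos.2 hne) ((dvd_abs _ _).2 this)
  have habs : |(j : ℤ) - k| < (p : ℤ) ^ n := by
    rw [abs_sub_lt_iff]
    zify at hj hk
    omega
  exact lt_irrefl _ (hle.trans_lt habs)

lemma cover_int_ball {x : ℚ_[p]} (hx : ‖x‖ ≤ 1) (n : ℕ) :
    ∃ j < p ^ n, ‖x - (j : ℚ_[p])‖ ≤ (p : ℝ) ^ (-(n:ℤ)) := by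
  set z : ℤ_[p] := ⟨x, hx⟩
  refine ⟨z.appr n, z.appr_lt n, ?_⟩
  have h := (PadicInt.norm_le_pow_iff_mem_span_pow (z - (z.appr n : ℤ_[p])) n).2
    (PadicInt.appr_spec n z)
  rw [PadicInt.norm_def, PadicInt.coe_sub, PadicInt.coe_natCast] at h
  simpa [z] using h

lemma ball_eq_union (n : ℕ) :
    closedBall (0 : ℚ_[p]) 1 =
      ⋃ j ∈ Finset.range (p ^ n), closedBall ((j : ℚ_[p])) ((p : ℝ) ^ (-(n:ℤ))) := by
  ext x
  simp only [mem_closedBall, dist_zero_right, Set.mem_iUnion, Finset.mem_range, dist_eq_norm, sub_zero]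
  constructor
  · intro hx
    obtain ⟨j, hj, h⟩ := cover_int_ball hx n
    exact ⟨j, hj, h⟩
  · rintro ⟨j, hj, h⟩
    have h1 : ‖((j:ℕ) : ℚ_[p])‖ ≤ 1 := by
      have := Padic.norm_int_le_one (p := p) (j : ℤ); push_cast at this ⊢; exact this
    have := Padic.nonarchimedean (x - (j:ℚ_[p])) ((j:ℕ) : ℚ_[p])
    simp only [sub_add_cancel] at this
    refine this.trans (max_le (h.trans ?_) h1)
    exact zpow_le_one_of_nonpos₀ (by exact_mod_cast (Fact.out : p.Prime).one_lt.le) (by simp)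

variable [MeasurableSpace ℚ_[p]] [BorelSpace ℚ_[p]] (μ : Measure ℚ_[p]) [μ.IsAddHaarMeasure]

lemma meas_ball_translate (c : ℚ_[p]) (r : ℝ) :
    μ (closedBall c r) = μ (closedBall 0 r) := by
  have : closedBall c r = ((-c) + ·) ⁻¹' closedBall (0:ℚ_[p]) r := by
    ext x
    simp [mem_closedBall, dist_eq_norm, neg_add_eq_sub]
  rw [this, measure_preimage_add]

lemma meas_ball_pow (hμ : μ {x : ℚ_[p] | ‖x‖ ≤ 1} = 1) (n : ℕ) :
    μ (closedBall (0:ℚ_[p]) ((p : ℝ) ^ (-(n:ℤ)))) = ((p : ℝ≥0∞) ^ n)⁻¹ := by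
  classical
  have hball1 : μ (closedBall (0:ℚ_[p]) 1) = 1 := by
    have : closedBall (0:ℚ_[p]) 1 = {x : ℚ_[p] | ‖x‖ ≤ 1} := by
      ext x; simp [mem_closedBall, dist_zero_right]
    rw [this, hμ]
  have hdisj : (Finset.range (p ^ n) : Set ℕ).PairwiseDisjoint
      (fun j => closedBall ((j:ℚ_[p])) ((p : ℝ) ^ (-(n:ℤ)))) := by
    intro j hj k hk hjk
    simp only [Finset.coe_range, Set.mem_Iio] at hj hk
    refine Set.disjoint_left.2 fun x hxj hxk => ?_
    simp only [mem_closedBall, dist_eq_norm] at hxj hxk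
    refine dist_residues hj hk hjk ?_
    have : (j : ℚ_[p]) - k = (x - k) - (x - j) := by ring
    rw [this]
    calc ‖(x - (k:ℚ_[p])) - (x - j)‖ ≤ max ‖x - (k:ℚ_[p])‖ ‖x - (j:ℚ_[p])‖ := by
          have h3 := Padic.nonarchimedean (x - (k:ℚ_[p])) (-(x - ((j:ℕ):ℚ_[p])))
          rw [norm_neg] at h3
          simpa [sub_eq_add_neg] using h3
      _ ≤ (p : ℝ) ^ (-(n:ℤ)) := max_le hxk hxj
  have hmeas : ∀ j : ℕ, MeasurableSet (closedBall ((j:ℚ_[p])) ((p : ℝ) ^ (-(n:ℤ)))) :=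
    fun j => measurableSet_closedBall
  have hsum := measure_biUnion_finset (μ := μ) hdisj (fun j _ => hmeas j)
  rw [← ball_eq_union, hball1] at hsum
  have hconst : ∀ j ∈ Finset.range (p ^ n),
      μ (closedBall ((j:ℚ_[p])) ((p : ℝ) ^ (-(n:ℤ)))) =
        μ (closedBall (0:ℚ_[p]) ((p : ℝ) ^ (-(n:ℤ)))) :=
    fun j _ => meas_ball_translate μ _ _
  rw [Finset.sum_congr rfl hconst, Finset.sum_const, Finset.card_range, nsmul_eq_mul] at hsum
  have hp0 : ((p ^ n : ℕ) : ℝ≥0∞) ≠ 0 := by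
    simp [pow_ne_zero, (Fact.out : p.Prime).ne_zero]
  have hpt : ((p ^ n : ℕ) : ℝ≥0∞) ≠ ⊤ := ENNReal.natCast_ne_top _
  calc μ (closedBall (0:ℚ_[p]) ((p : ℝ) ^ (-(n:ℤ))))
      = ((p ^ n : ℕ) : ℝ≥0∞)⁻¹ * (((p ^ n : ℕ) : ℝ≥0∞)
          * μ (closedBall (0:ℚ_[p]) ((p : ℝ) ^ (-(n:ℤ))))) := by
        rw [← mul_assoc, ENNReal.inv_mul_cancel hp0 hpt, one_mul]
    _ = ((p : ℝ≥0∞) ^ n)⁻¹ := by rw [← hsum, mul_one]; push_cast; ring_nf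

lemma meas_ball_le (hμ : μ {x : ℚ_[p] | ‖x‖ ≤ 1} = 1) {r : ℝ} (hr0 : 0 ≤ r) (hr1 : r ≤ 1) :
    μ (closedBall (0:ℚ_[p]) r) ≤ ENNReal.ofReal r := by
  have hp1 : (1 : ℝ) < (p : ℝ) := by exact_mod_cast (Fact.out : p.Prime).one_lt
  rcases eq_or_lt_of_le hr0 with h0 | h0
  · -- r = 0 : the singleton has measure zero
    rw [← h0]
    rw [Metric.closedBall_zero, ENNReal.ofReal_zero, le_zero_iff]
    have hlim : ∀ n : ℕ, μ {(0:ℚ_[p])} ≤ ((p : ℝ≥0∞) ^ n)⁻¹ := by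
      intro n
      rw [← meas_ball_pow μ hμ n]
      exact measure_mono (by
        intro x hx
        simp only [Set.mem_singleton_iff] at hx
        simp [hx, mem_closedBall, zpow_nonneg (by positivity : (0:ℝ) ≤ (p:ℝ))])
    have hten : Filter.Tendsto (fun n : ℕ => ((p : ℝ≥0∞) ^ n)⁻¹) Filter.atTop (nhds 0) := by
      have heq : (fun n : ℕ => ((p : ℝ≥0∞) ^ n)⁻¹) = fun n : ℕ => ((p:ℝ≥0∞)⁻¹) ^ n := by
        funext m; rw [ENNReal.inv_pow]
      rw [heq]
      apply ENNReal.tendsto_pow_atTop_nhds_zero_of_lt_one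
      rw [ENNReal.inv_lt_one]
      exact_mod_cast Nat.one_lt_cast.2 (Fact.out : p.Prime).one_lt
    exact le_zero_iff.1 (le_of_tendsto_of_tendsto' tendsto_const_nhds hten hlim)
  · -- 0 < r : find n minimal with p^(-n) ≤ r
    have hex : ∃ n : ℕ, (p : ℝ) ^ (-(n:ℤ)) ≤ r := by
      obtain ⟨n, hn⟩ := exists_pow_lt_of_lt_one h0 (by
        rw [one_div]; exact inv_lt_one_of_one_lt₀ hp1 : 1 / (p:ℝ) < 1)
      exact ⟨n, by rw [zpow_neg, ← one_div, div_pow, one_pow] at *; push_cast at *; exact hn.le⟩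
    classical
    let n := Nat.find hex
    have hn : (p : ℝ) ^ (-(n:ℤ)) ≤ r := Nat.find_spec hex
    have hsub : closedBall (0:ℚ_[p]) r ⊆ closedBall (0:ℚ_[p]) ((p : ℝ) ^ (-(n:ℤ))) := by
      intro x hx
      simp only [mem_closedBall, dist_zero_right] at hx ⊢
      rcases Nat.eq_zero_or_pos n with hn0 | hn0
      · -- n = 0 : p^0 = 1 ≥ r
        rw [hn0]; push_cast; simpa using hx.trans hr1
      · have hmin : ¬ ((p : ℝ) ^ (-((n-1 : ℕ):ℤ)) ≤ r) := Nat.find_min hex (by omega)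
        push_neg at hmin
        have hlt : ‖x‖ < (p : ℝ) ^ ((-(n:ℤ)) + 1) := by
          have h4 := hx.trans_lt hmin
          rwa [show (-((n-1 : ℕ):ℤ)) = -(n:ℤ) + 1 by omega] at h4
        exact (Padic.norm_le_pow_iff_norm_lt_pow_add_one x (-(n:ℤ))).2 hlt
    calc μ (closedBall (0:ℚ_[p]) r) ≤ μ (closedBall (0:ℚ_[p]) ((p : ℝ) ^ (-(n:ℤ)))) :=
          measure_mono hsub
      _ = ((p : ℝ≥0∞) ^ n)⁻¹ := meas_ball_pow μ hμ n
      _ = ENNReal.ofReal ((p : ℝ) ^ (-(n:ℤ))) := by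
          rw [zpow_neg, zpow_natCast, ENNReal.ofReal_inv_of_pos (by positivity),
            ENNReal.ofReal_pow (by positivity)]
          norm_num
      _ ≤ ENNReal.ofReal r := ENNReal.ofReal_le_ofReal hn

lemma frostman (hμ : μ {x : ℚ_[p] | ‖x‖ ≤ 1} = 1) :
    (volume : Measure ℝ).prod μ ≤ (μH[2] : Measure (ℝ × ℚ_[p])) := by
  refine MeasureTheory.Measure.le_hausdorffMeasure 2 _ 1 one_pos fun s hs => ?_
  rcases Set.eq_empty_or_nonempty s with rfl | ⟨⟨a, b⟩, hab⟩
  · simp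
  have hsub : s ⊆ (Prod.fst '' s) ×ˢ (Prod.snd '' s) := fun x hx =>
    ⟨⟨x, hx, rfl⟩, ⟨x, hx, rfl⟩⟩
  have hd1 : EMetric.diam (Prod.fst '' s) ≤ EMetric.diam s := by
    have h := LipschitzWith.prod_fst.ediam_image_le s; simp at h; exact h
  have hd2 : EMetric.diam (Prod.snd '' s) ≤ EMetric.diam s := by
    have h := LipschitzWith.prod_snd.ediam_image_le s; simp at h; exact h
  have hB : EMetric.diam (Prod.snd '' s) ≠ ⊤ := (hd2.trans hs).trans_lt ENNReal.one_lt_top |>.ne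
  set B := Prod.snd '' s with hBdef
  have hbB : b ∈ B := ⟨(a, b), hab, rfl⟩
  have hμB : μ B ≤ EMetric.diam B := by
    have hBsub : B ⊆ closedBall b (Metric.diam B) := fun y hy =>
      Metric.mem_closedBall'.2 (Metric.dist_le_diam_of_mem
        (Metric.isBounded_iff_ediam_ne_top.2 hB) hbB hy)
    calc μ B ≤ μ (closedBall b (Metric.diam B)) := measure_mono hBsub
      _ = μ (closedBall 0 (Metric.diam B)) := meas_ball_translate μ _ _
      _ ≤ ENNReal.ofReal (Metric.diam B) := by
          refine meas_ball_le μ hμ Metric.diam_nonneg ?_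
          have : EMetric.diam B ≤ 1 := hd2.trans hs
          rw [Metric.diam]
          exact ENNReal.toReal_le_of_le_ofReal zero_le_one (by rw [ENNReal.ofReal_one]; exact this)
      _ = EMetric.diam B := by rw [Metric.diam]; exact ENNReal.ofReal_toReal hB
  calc (volume : Measure ℝ).prod μ s ≤
      (volume : Measure ℝ).prod μ ((Prod.fst '' s) ×ˢ B) := measure_mono hsub
    _ = volume (Prod.fst '' s) * μ B := Measure.prod_prod _ _
    _ ≤ EMetric.diam s * EMetric.diam s :=
        mul_le_mul' ((Real.volume_le_diam _).trans hd1) (hμB.trans hd2)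
    _ = EMetric.diam s ^ (2:ℝ) := by
        rw [show (2:ℝ) = ((2:ℕ):ℝ) by norm_num, ENNReal.rpow_natCast, sq]

lemma upper_bound :
    (μH[2] : Measure (ℝ × ℚ_[p])) (Set.Icc (0:ℝ) 1 ×ˢ closedBall (0:ℚ_[p]) 1) ≤ 1 := by
  classical
  have hp1 : (1 : ℝ) < (p : ℝ) := by exact_mod_cast (Fact.out : p.Prime).one_lt
  have hppos : (0:ℝ) < p := lt_trans one_pos hp1
  have hpn : ∀ n : ℕ, 0 < p ^ n := fun n => pow_pos (Fact.out : p.Prime).pos n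
  have hzpow : ∀ n : ℕ, (p : ℝ) ^ (-(n:ℤ)) = ((p:ℝ)⁻¹) ^ n := fun n => by
    rw [zpow_neg, zpow_natCast, inv_pow]
  set q : ℕ → ℝ := fun n => ((p:ℝ)⁻¹) ^ n with hq
  have hqpos : ∀ n, 0 < q n := fun n => by positivity
  set r : ℕ → ℝ≥0∞ := fun n => ENNReal.ofReal (q n) with hr
  have hr0 : Filter.Tendsto r Filter.atTop (nhds 0) := by
    have h1 : Filter.Tendsto q Filter.atTop (nhds 0) :=
      tendsto_pow_atTop_nhds_zero_of_lt_one (by positivity) (inv_lt_one_of_one_lt₀ hp1)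
    simpa [hr, Function.comp_def] using (ENNReal.continuous_ofReal.tendsto 0).comp h1
  set t : ∀ n : ℕ, Fin (p^n) × Fin (p^n) → Set (ℝ × ℚ_[p]) := fun n ij =>
    Set.Icc ((ij.1 : ℝ) * q n) ((ij.1 + 1 : ℝ) * q n) ×ˢ
      closedBall (((ij.2 : ℕ) : ℚ_[p])) ((p : ℝ) ^ (-(n:ℤ))) with ht
  have hdiam : ∀ n (ij : Fin (p^n) × Fin (p^n)), EMetric.diam (t n ij) ≤ r n := by
    intro n ij
    refine EMetric.diam_le ?_
    rintro ⟨x1, x2⟩ ⟨hx1, hx2⟩ ⟨y1, y2⟩ ⟨hy1, hy2⟩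
    rw [Prod.edist_eq, max_le_iff]
    constructor
    · calc edist x1 y1 ≤ EMetric.diam (Set.Icc ((ij.1 : ℝ) * q n) ((ij.1 + 1 : ℝ) * q n)) :=
            EMetric.edist_le_diam_of_mem hx1 hy1
        _ ≤ r n := by
            rw [EMetric.diam, Real.ediam_Icc]
            apply ENNReal.ofReal_le_ofReal
            nlinarith [hqpos n]
    · rw [edist_dist, dist_eq_norm]
      apply ENNReal.ofReal_le_ofReal
      rw [show q n = (p:ℝ) ^ (-(n:ℤ)) from (hzpow n).symm]
      simp only [mem_closedBall, dist_eq_norm] at hx2 hy2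
      have h3 := Padic.nonarchimedean (x2 - (((ij.2 : ℕ) : ℚ_[p])))
        ((((ij.2 : ℕ) : ℚ_[p])) - y2)
      rw [sub_add_sub_cancel] at h3
      refine h3.trans (max_le hx2 ?_)
      rw [← norm_neg]; simpa using hy2
  have hcover : ∀ n : ℕ, (Set.Icc (0:ℝ) 1 ×ˢ closedBall (0:ℚ_[p]) 1) ⊆ ⋃ ij, t n ij := by
    intro n
    rintro ⟨x, y⟩ ⟨hx, hy⟩
    simp only [Set.mem_Icc] at hx
    -- real index
    have hqn : q n = ((p:ℝ)^n)⁻¹ := by show ((p:ℝ)⁻¹)^n = ((p:ℝ)^n)⁻¹; rw [inv_pow]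
    set i : ℕ := min ⌊x * (p:ℝ)^n⌋₊ (p^n - 1) with hi
    have hilt : i < p^n := by
      have := hpn n
      omega
    -- padic index
    obtain ⟨j, hjlt, hjle⟩ := cover_int_ball (by simpa [mem_closedBall, dist_zero_right] using hy) n
    refine Set.mem_iUnion.2 ⟨(⟨i, hilt⟩, ⟨j, hjlt⟩), ?_, by simpa [dist_eq_norm] using hjle⟩
    simp only [Set.mem_Icc]
    have hpnpos : (0:ℝ) < (p:ℝ)^n := by positivity
    have key : (i : ℝ) * q n ≤ x ∧ x ≤ (i + 1 : ℝ) * q n := by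
      rcases le_or_gt (⌊x * (p:ℝ)^n⌋₊) (p^n - 1) with hc | hc
      · have hie : i = ⌊x * (p:ℝ)^n⌋₊ := by rw [hi]; omega
        constructor
        · rw [hie, hqn, ← div_eq_mul_inv, div_le_iff₀ hpnpos]
          exact (Nat.floor_le (mul_nonneg hx.1 (by positivity))).trans (by rfl)
        · rw [hie, hqn, ← div_eq_mul_inv, le_div_iff₀ hpnpos]
          have := Nat.lt_floor_add_one (x * (p:ℝ)^n)
          push_cast
          linarith [this]
      · -- x * p^n ≥ p^n, so x = 1
        have hx1 : (p:ℝ)^n ≤ x * (p:ℝ)^n := by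
          have h5' : p^n ≤ ⌊x * (p:ℝ)^n⌋₊ := by have := hpn n; omega
          have h5 : ((p^n : ℕ):ℝ) ≤ (⌊x * (p:ℝ)^n⌋₊ : ℝ) := by exact_mod_cast h5'
          refine le_trans ?_ (Nat.floor_le (mul_nonneg hx.1 (by positivity)))
          push_cast at h5 ⊢
          linarith
        have hxeq : x = 1 := le_antisymm hx.2 (by nlinarith)
        have hie : i = p^n - 1 := by rw [hi]; omega
        subst hxeq
        constructor
        · rw [hie, hqn, ← div_eq_mul_inv, div_le_iff₀ hpnpos]
          push_cast [Nat.cast_sub (hpn n)]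
          linarith
        · rw [hie, hqn, ← div_eq_mul_inv, le_div_iff₀ hpnpos]
          push_cast [Nat.cast_sub (hpn n)]
          linarith
    exact key
  have hle := MeasureTheory.Measure.hausdorffMeasure_le_liminf_sum 2
    (Set.Icc (0:ℝ) 1 ×ˢ closedBall (0:ℚ_[p]) 1) r hr0 t
    (Filter.Eventually.of_forall hdiam) (Filter.Eventually.of_forall hcover)
  refine hle.trans ?_
  have hsum : ∀ n : ℕ, (∑ ij : Fin (p^n) × Fin (p^n), EMetric.diam (t n ij) ^ (2:ℝ)) ≤ 1 := by
    intro n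
    have hbound : ∀ ij : Fin (p^n) × Fin (p^n), EMetric.diam (t n ij) ^ (2:ℝ) ≤ (r n) ^ (2:ℝ) :=
      fun ij => ENNReal.rpow_le_rpow (hdiam n ij) (by norm_num)
    calc (∑ ij : Fin (p^n) × Fin (p^n), EMetric.diam (t n ij) ^ (2:ℝ))
        ≤ ∑ _ij : Fin (p^n) × Fin (p^n), (r n) ^ (2:ℝ) := Finset.sum_le_sum fun ij _ => hbound ij
      _ = ((p^n : ℕ) : ℝ≥0∞) * ((p^n : ℕ) : ℝ≥0∞) * (r n) ^ (2:ℝ) := by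
          simp [Finset.card_univ, mul_assoc]
      _ = 1 := by
          set N : ℝ≥0∞ := ((p^n : ℕ) : ℝ≥0∞) with hN
          have hN0 : N ≠ 0 := by simpa [hN] using (hpn n).ne'
          have hNt : N ≠ ⊤ := ENNReal.natCast_ne_top _
          have hNr : r n = N⁻¹ := by
            rw [hr]
            show ENNReal.ofReal (q n) = N⁻¹
            rw [hq]
            show ENNReal.ofReal (((p:ℝ)⁻¹)^n) = N⁻¹
            rw [inv_pow, ENNReal.ofReal_inv_of_pos (by positivity),
              show ((p:ℝ)^n) = ((p^n : ℕ) : ℝ) by push_cast; ring, ENNReal.ofReal_natCast]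
          rw [hNr, show (2:ℝ) = ((2:ℕ):ℝ) by norm_num, ENNReal.rpow_natCast, sq]
          calc N * N * (N⁻¹ * N⁻¹) = (N * N⁻¹) * (N * N⁻¹) := by ring
            _ = 1 := by rw [ENNReal.mul_inv_cancel hN0 hNt, one_mul]
  calc Filter.liminf (fun n => ∑ ij : Fin (p^n) × Fin (p^n), EMetric.diam (t n ij) ^ (2:ℝ))
        Filter.atTop ≤ Filter.liminf (fun _ : ℕ => (1:ℝ≥0∞)) Filter.atTop := by
        refine Filter.liminf_le_liminf (Filter.Eventually.of_forall fun n => hsum n) ?_ ?_ <;>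
          isBoundedDefault
    _ = 1 := Filter.liminf_const _

theorem hausdorff_eq_prod_mixed_aux (p : ℕ) [Fact p.Prime]
    [MeasurableSpace ℚ_[p]] [BorelSpace ℚ_[p]]
    (μ : Measure ℚ_[p]) [μ.IsAddHaarMeasure]
    (hμ : μ {x : ℚ_[p] | ‖x‖ ≤ 1} = 1) :
    (μH[2] : Measure (ℝ × ℚ_[p])) = (volume : Measure ℝ).prod μ := by
  set ν : Measure (ℝ × ℚ_[p]) := (volume : Measure ℝ).prod μ with hν
  set K : Set (ℝ × ℚ_[p]) := Set.Icc (0:ℝ) 1 ×ˢ closedBall (0:ℚ_[p]) 1 with hK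
  have hKcomp : IsCompact K := isCompact_Icc.prod (isCompact_closedBall _ _)
  have hKint : (interior K).Nonempty := by
    refine ⟨(1/2, 0), ?_⟩
    apply mem_interior.2
    refine ⟨Set.Ioo (0:ℝ) 1 ×ˢ ball (0:ℚ_[p]) 1, ?_, ?_, ?_⟩
    · exact Set.prod_mono Set.Ioo_subset_Icc_self ball_subset_closedBall
    · exact isOpen_Ioo.prod isOpen_ball
    · constructor <;> simp <;> norm_num
  have hfro : ν ≤ (μH[2] : Measure (ℝ × ℚ_[p])) := frostman μ hμ
  have hνK : ν K = 1 := by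
    rw [hν, hK, Measure.prod_prod, Real.volume_Icc]
    have : closedBall (0:ℚ_[p]) 1 = {x : ℚ_[p] | ‖x‖ ≤ 1} := by
      ext x; simp [mem_closedBall, dist_zero_right]
    rw [this, hμ]
    norm_num
  have hup : (μH[2] : Measure (ℝ × ℚ_[p])) K ≤ 1 := upper_bound
  have hlow : 1 ≤ (μH[2] : Measure (ℝ × ℚ_[p])) K := hνK ▸ hfro K
  have hHK : (μH[2] : Measure (ℝ × ℚ_[p])) K = 1 := le_antisymm hup hlow
  haveI : (μH[2] : Measure (ℝ × ℚ_[p])).IsAddHaarMeasure :=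
    Measure.isAddHaarMeasure_of_isCompact_nonempty_interior _ K hKcomp hKint
      (by rw [hHK]; exact one_ne_zero) (by rw [hHK]; exact ENNReal.one_ne_top)
  have key := Measure.isAddLeftInvariant_eq_smul (μH[2] : Measure (ℝ × ℚ_[p])) ν
  have hc := congrArg (fun m : Measure (ℝ × ℚ_[p]) => m K) key
  simp only [Measure.smul_apply, smul_eq_mul, hνK, hHK, mul_one] at hc
  rw [key]
  ext s hs
  have hc' : ((μH[2] : Measure (ℝ × ℚ_[p])).addHaarScalarFactor ν : ℝ≥0∞) = 1 := by
    simpa [ENNReal.smul_def] using hc.symm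
  simp only [Measure.smul_apply, ENNReal.smul_def, hc', one_smul]

/-- The 2-dimensional Hausdorff measure on `X = ℝ × ℚ_p` (with the maximum metric) equals
the product of Lebesgue measure on `ℝ` and the Haar measure on `ℚ_p` normalized so that
`ℤ_p` has measure `1`. -/
theorem hausdorff_eq_prod_mixed (p : ℕ) [Fact p.Prime]
    [MeasurableSpace ℚ_[p]] [BorelSpace ℚ_[p]]
    (μ : Measure ℚ_[p]) [μ.IsAddHaarMeasure]
    (hμ : μ {x : ℚ_[p] | ‖x‖ ≤ 1} = 1) :
    (μH[2] : Measure (ℝ × ℚ_[p])) = (volume : Measure ℝ).prod μ := by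
  exact hausdorff_eq_prod_mixed_aux p μ hμ
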